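/- arXiv:2002.03849 — 6 statements merged into one kernel-verified Lean document; each statement's English description precedes it below -/
import Mathlib

section
/- For the Cauchy bridge midpoint density g with 0 ≤ L < σT, the point x = L/2 is a strict local maximum of g; specifically the second derivative of g at L/2 is negative. -/
open Real Filter

/-- For `0 ≤ L < σT` the point `L/2` is a strict local maximum of the Cauchy
bridge midpoint density; specifically `g''(L/2) < 0`. -/
theorem cauchy_bridge_midpoint_local_max (σ T L : ℝ) (hσ : 0 < σ) (hT : 0 < T)
    (hL0 : 0 ≤ L) (hL : L < σ * T)
    (f : ℝ → ℝ → ℝ) (hf : ∀ x t, f x t = (σ * t / π) / (x ^ 2 + σ ^ 2 * t ^ 2))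
    (g : ℝ → ℝ) (hg : ∀ x, g x = f x (T / 2) * f (L - x) (T / 2) / f L T) :
    deriv (deriv g) (L / 2) < 0 ∧
      ∀ᶠ x in nhdsWithin (L / 2) {(L / 2)}ᶜ, g x < g (L / 2) := by
  have hπ := Real.pi_pos
  have hσT : 0 < σ * T := mul_pos hσ hT
  have hS : 0 < σ ^ 2 * T ^ 2 - L ^ 2 := by nlinarith
  -- abbreviations
  obtain ⟨Q, hQdef⟩ : ∃ Q : ℝ → ℝ,
      Q = fun x => (x ^ 2 + σ ^ 2 * (T / 2) ^ 2) * ((L - x) ^ 2 + σ ^ 2 * (T / 2) ^ 2) :=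
    ⟨_, rfl⟩
  obtain ⟨Q', hQ'def⟩ : ∃ Q' : ℝ → ℝ,
      Q' = fun x => 2 * x * ((L - x) ^ 2 + σ ^ 2 * (T / 2) ^ 2)
        - 2 * (L - x) * (x ^ 2 + σ ^ 2 * (T / 2) ^ 2) := ⟨_, rfl⟩
  obtain ⟨Q'', hQ''def⟩ : ∃ Q'' : ℝ → ℝ,
      Q'' = fun x => 2 * ((L - x) ^ 2 + σ ^ 2 * (T / 2) ^ 2)
        + 2 * (x ^ 2 + σ ^ 2 * (T / 2) ^ 2) - 8 * x * (L - x) := ⟨_, rfl⟩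
  obtain ⟨A, hAdef⟩ : ∃ A : ℝ,
      A = (σ * (T / 2) / π) ^ 2 * (L ^ 2 + σ ^ 2 * T ^ 2) * π / (σ * T) := ⟨_, rfl⟩
  have hQpos : ∀ x, 0 < Q x := by
    intro x; rw [hQdef]; positivity
  have hA : 0 < A := by rw [hAdef]; positivity
  -- g is A / Q
  have hgA : ∀ x, g x = A / Q x := by
    intro x
    rw [hg, hf, hf, hf, hAdef, hQdef]
    have h1 : x ^ 2 + σ ^ 2 * (T / 2) ^ 2 ≠ 0 := by positivity
    have h2 : (L - x) ^ 2 + σ ^ 2 * (T / 2) ^ 2 ≠ 0 := by positivity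
    have h3 : L ^ 2 + σ ^ 2 * T ^ 2 ≠ 0 := by positivity
    field_simp
  -- derivatives
  have hQ : ∀ x, HasDerivAt Q (Q' x) x := by
    intro x
    rw [hQdef, hQ'def]
    have h1 : HasDerivAt (fun x : ℝ => x ^ 2 + σ ^ 2 * (T / 2) ^ 2) (2 * x) x := by
      simpa using (hasDerivAt_pow 2 x).add_const (σ ^ 2 * (T / 2) ^ 2)
    have h2 : HasDerivAt (fun x : ℝ => (L - x) ^ 2 + σ ^ 2 * (T / 2) ^ 2)
        (-(2 * (L - x))) x := by
      have := (((hasDerivAt_id x).const_sub L).fun_pow 2).add_const (σ ^ 2 * (T / 2) ^ 2)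
      simp only [id_eq] at this
      refine this.congr_deriv ?_
      push_cast
      ring
    have := h1.fun_mul h2
    refine this.congr_deriv ?_
    ring
  have hQ' : ∀ x, HasDerivAt Q' (Q'' x) x := by
    intro x
    rw [hQ'def, hQ''def]
    have h1 : HasDerivAt (fun x : ℝ => x ^ 2 + σ ^ 2 * (T / 2) ^ 2) (2 * x) x := by
      simpa using (hasDerivAt_pow 2 x).add_const (σ ^ 2 * (T / 2) ^ 2)
    have h2 : HasDerivAt (fun x : ℝ => (L - x) ^ 2 + σ ^ 2 * (T / 2) ^ 2)
        (-(2 * (L - x))) x := by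
      have := (((hasDerivAt_id x).const_sub L).fun_pow 2).add_const (σ ^ 2 * (T / 2) ^ 2)
      simp only [id_eq] at this
      refine this.congr_deriv ?_
      push_cast
      ring
    have h3 : HasDerivAt (fun x : ℝ => 2 * x) 2 x := by
      simpa using (hasDerivAt_id x).const_mul 2
    have h4 : HasDerivAt (fun x : ℝ => 2 * (L - x)) (-2) x := by
      have := ((hasDerivAt_id x).const_sub L).const_mul 2
      simp only [id_eq] at this
      refine this.congr_deriv ?_
      ring
    have := (h3.fun_mul h2).fun_sub (h4.fun_mul h1)
    refine this.congr_deriv ?_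
    ring
  have hg' : ∀ x, HasDerivAt g (-A * Q' x / (Q x) ^ 2) x := by
    intro x
    have heq : g = fun x => A / Q x := funext hgA
    rw [heq]
    have := (hasDerivAt_const x A).fun_div (hQ x) (hQpos x).ne'
    refine this.congr_deriv ?_
    ring
  have hderivg : deriv g = fun x => -A * Q' x / (Q x) ^ 2 := funext fun x => (hg' x).deriv
  have hQ'c : Q' (L / 2) = 0 := by rw [hQ'def]; ring
  have hQ''c : Q'' (L / 2) = σ ^ 2 * T ^ 2 - L ^ 2 := by rw [hQ''def]; ring
  constructor
  · -- second derivative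
    have hnum : HasDerivAt (fun x => -A * Q' x) (-A * Q'' (L / 2)) (L / 2) :=
      (hQ' (L / 2)).const_mul (-A)
    have hden : HasDerivAt (fun x => (Q x) ^ 2) (2 * Q (L / 2) * Q' (L / 2)) (L / 2) := by
      have := (hQ (L / 2)).fun_pow 2
      refine this.congr_deriv ?_
      ring
    have hF := hnum.fun_div hden (pow_ne_zero 2 (hQpos (L / 2)).ne')
    rw [hderivg]
    rw [hF.deriv]
    rw [hQ'c, hQ''c]
    have hQc := hQpos (L / 2)
    have hnumneg : -A * (σ ^ 2 * T ^ 2 - L ^ 2) * Q (L / 2) ^ 2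
        - -A * 0 * (2 * Q (L / 2) * 0) < 0 := by
      nlinarith [mul_pos (mul_pos hA hS) (pow_pos hQc 2)]
    exact div_neg_of_neg_of_pos hnumneg (by positivity)
  · -- strict local max
    apply eventually_nhdsWithin_of_forall
    intro x hx
    have hxne' : x ≠ L / 2 := hx
    have hxne : x - L / 2 ≠ 0 := sub_ne_zero.2 hxne'
    have hu : 0 < (x - L / 2) ^ 2 := by positivity
    have hdiff : Q x - Q (L / 2)
        = (x - L / 2) ^ 2 * ((x - L / 2) ^ 2 + (σ ^ 2 * T ^ 2 - L ^ 2) / 2) := by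
      rw [hQdef]; ring
    have hQlt : Q (L / 2) < Q x := by nlinarith
    rw [hgA, hgA]
    exact div_lt_div_of_pos_left hA (hQpos (L / 2)) hQlt
end

section
/- For the Cauchy bridge midpoint density g with L > σT, the second derivative of g at x = L/2 is positive, so L/2 is a strict local minimum of g; i.e., the midpoint density undergoes a structural change (unimodal to bimodal) at the bifurcation length L_b = σT. -/
open Real Filter

/-- For `L > σT` the point `L/2` is a strict local minimum of the Cauchy
bridge midpoint density; specifically `g''(L/2) > 0` (bifurcation at `L_b = σT`). -/
theorem cauchy_bridge_midpoint_local_min (σ T L : ℝ) (hσ : 0 < σ) (hT : 0 < T)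
    (hL : σ * T < L)
    (f : ℝ → ℝ → ℝ) (hf : ∀ x t, f x t = (σ * t / π) / (x ^ 2 + σ ^ 2 * t ^ 2))
    (g : ℝ → ℝ) (hg : ∀ x, g x = f x (T / 2) * f (L - x) (T / 2) / f L T) :
    0 < deriv (deriv g) (L / 2) ∧
      ∀ᶠ x in nhdsWithin (L / 2) {(L / 2)}ᶜ, g (L / 2) < g x := by
  have hπ := Real.pi_pos
  have hσT : 0 < σ * T := by positivity
  have hLpos : 0 < L := lt_trans hσT hL
  set A : ℝ := σ ^ 2 * (T / 2) ^ 2 with hAdef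
  have hApos : 0 < A := by positivity
  have hL2A : 4 * A < L ^ 2 := by
    have : (σ * T) ^ 2 < L ^ 2 := by nlinarith
    nlinarith
  have hcpos : 0 < f L T := by
    rw [hf]; positivity
  set K : ℝ := (σ * (T / 2) / π) ^ 2 / f L T with hKdef
  have hKpos : 0 < K := div_pos (by positivity) hcpos
  set p : ℝ → ℝ := fun x => (x * x + A) * ((L - x) * (L - x) + A) with hpdef
  have hppos : ∀ x, 0 < p x := fun x => by
    have : 0 < x * x + A := by nlinarith [mul_self_nonneg x]
    have : 0 < (L - x) * (L - x) + A := by nlinarith [mul_self_nonneg (L - x)]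
    simp only [hpdef]; positivity
  -- rewrite g
  have hgp : g = fun x => K / p x := by
    funext x
    have key : ∀ a q r c : ℝ, a / q * (a / r) / c = a ^ 2 / c / (q * r) := by
      intro a q r c
      rw [div_mul_div_comm, div_div, div_div, mul_comm c (q * r), pow_two]
    rw [hg, hf, hf, hKdef, hpdef, hAdef]
    beta_reduce
    rw [← pow_two x, ← pow_two (L - x)]
    exact key _ _ _ _
  set p' : ℝ → ℝ := fun x => 2 * x * ((L - x) * (L - x) + A) - (x * x + A) * (2 * (L - x))
    with hp'def
  have hp' : ∀ x, HasDerivAt p (p' x) x := by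
    intro x
    have h1 : HasDerivAt (fun x : ℝ => x * x + A) (2 * x) x := by
      have := ((hasDerivAt_id x).mul (hasDerivAt_id x)).add_const A
      exact this.congr_deriv (by simp only [id]; ring)
    have h2 : HasDerivAt (fun x : ℝ => (L - x) * (L - x) + A) (-(2 * (L - x))) x := by
      have hlx : HasDerivAt (fun x : ℝ => L - x) (0 - 1) x :=
        (hasDerivAt_const x L).sub (hasDerivAt_id x)
      have := (hlx.mul hlx).add_const A
      exact this.congr_deriv (by ring)
    have := h1.mul h2
    exact this.congr_deriv (by simp only [hp'def]; ring)
  have hdg : deriv g = fun x => (0 * p x - K * p' x) / p x ^ 2 := by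
    funext x
    rw [hgp]
    exact (((hasDerivAt_const x K).div (hp' x) (hppos x).ne')).deriv
  set p'' : ℝ → ℝ := fun x =>
    2 * ((L - x) * (L - x) + A) - 8 * x * (L - x) + 2 * (x * x + A) with hp''def
  have hp'' : ∀ x, HasDerivAt p' (p'' x) x := by
    intro x
    have h1 : HasDerivAt (fun x : ℝ => x * x + A) (2 * x) x := by
      have := ((hasDerivAt_id x).mul (hasDerivAt_id x)).add_const A
      exact this.congr_deriv (by simp only [id]; ring)
    have h2 : HasDerivAt (fun x : ℝ => (L - x) * (L - x) + A) (-(2 * (L - x))) x := by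
      have hlx : HasDerivAt (fun x : ℝ => L - x) (0 - 1) x :=
        (hasDerivAt_const x L).sub (hasDerivAt_id x)
      have := (hlx.mul hlx).add_const A
      exact this.congr_deriv (by ring)
    have hlx : HasDerivAt (fun x : ℝ => 2 * (L - x)) (-2) x := by
      have := ((hasDerivAt_const x L).sub (hasDerivAt_id x)).const_mul 2
      exact this.congr_deriv (by ring)
    have hid2 : HasDerivAt (fun x : ℝ => 2 * x) 2 x := by
      have := (hasDerivAt_id x).const_mul 2
      exact this.congr_deriv (by ring)
    have := ((hid2.mul h2)).sub (h1.mul hlx)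
    exact this.congr_deriv (by simp only [hp''def]; ring)
  -- second derivative at L/2
  set x₀ : ℝ := L / 2 with hx0
  have hNum : HasDerivAt (fun x => 0 * p x - K * p' x)
      (0 * p' x₀ - K * p'' x₀) x₀ := by
    have h1 := (hp' x₀).const_mul 0
    have h2 := (hp'' x₀).const_mul K
    exact h1.sub h2
  have hDen : HasDerivAt (fun x => p x ^ 2) (2 * p x₀ ^ 1 * p' x₀) x₀ := by
    have := (hp' x₀).pow 2
    exact this.congr_deriv (by norm_num)
  have hDen0 : p x₀ ^ 2 ≠ 0 := pow_ne_zero 2 (hppos x₀).ne'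
  have hdd : HasDerivAt (deriv g)
      (((0 * p' x₀ - K * p'' x₀) * p x₀ ^ 2 -
        (0 * p x₀ - K * p' x₀) * (2 * p x₀ ^ 1 * p' x₀)) / (p x₀ ^ 2) ^ 2) x₀ := by
    rw [hdg]
    exact hNum.div hDen hDen0
  have hval := hdd.deriv
  have hp'0 : p' x₀ = 0 := by simp only [hp'def, hx0]; ring
  have hp''0 : p'' x₀ = 4 * A - L ^ 2 := by simp only [hp''def, hx0]; ring
  constructor
  · rw [hval, hp'0, hp''0]
    have hpx0 : 0 < p x₀ := hppos x₀
    have hnum : 0 < (0 * 0 - K * (4 * A - L ^ 2)) * p x₀ ^ 2 -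
        (0 * p x₀ - K * 0) * (2 * p x₀ ^ 1 * 0) := by
      have hid : (0 * 0 - K * (4 * A - L ^ 2)) * p x₀ ^ 2 -
          (0 * p x₀ - K * 0) * (2 * p x₀ ^ 1 * 0) = K * (L ^ 2 - 4 * A) * p x₀ ^ 2 := by
        ring
      rw [hid]
      have : 0 < L ^ 2 - 4 * A := by linarith
      positivity
    exact div_pos hnum (by positivity)
  · have hδ : 0 < (L ^ 2 - 4 * A) / 2 := by linarith
    set δ := Real.sqrt ((L ^ 2 - 4 * A) / 2) with hδdef
    have hδpos : 0 < δ := Real.sqrt_pos.mpr hδ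
    filter_upwards [self_mem_nhdsWithin,
      mem_nhdsWithin_of_mem_nhds (Metric.ball_mem_nhds x₀ hδpos)] with x hx hxb
    have hxne : x ≠ x₀ := hx
    have hdist : |x - x₀| < δ := by
      have := Metric.mem_ball.mp hxb
      rwa [Real.dist_eq] at this
    have hu2 : (x - x₀) ^ 2 < (L ^ 2 - 4 * A) / 2 := by
      have h1 : |x - x₀| ^ 2 < δ ^ 2 := by
        apply pow_lt_pow_left₀ hdist (abs_nonneg _)
        norm_num
      rw [sq_abs] at h1
      rwa [Real.sq_sqrt hδ.le] at h1
    have hu2pos : 0 < (x - x₀) ^ 2 := by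
      have : x - x₀ ≠ 0 := sub_ne_zero.mpr hxne
      positivity
    have hplt : p x < p x₀ := by
      have key : p x₀ - p x = (x - x₀) ^ 2 * ((L ^ 2 - 4 * A) / 2 - (x - x₀) ^ 2) := by
        simp only [hpdef, hx0]
        ring
      have hpos : 0 < (x - x₀) ^ 2 * ((L ^ 2 - 4 * A) / 2 - (x - x₀) ^ 2) :=
        mul_pos hu2pos (by linarith)
      linarith
    rw [hgp]
    exact div_lt_div_of_pos_left hKpos (hppos x) hplt
end

section
/- For the Cauchy bridge midpoint density, the second derivative of g at x = L/2 vanishes exactly when L = σT (for L ≥ 0). -/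
open Real

/-- The second derivative of the Cauchy bridge midpoint density at `L/2`
vanishes exactly when `L = σT` (for `L ≥ 0`). -/
theorem cauchy_bridge_bifurcation_length (σ T L : ℝ) (hσ : 0 < σ) (hT : 0 < T)
    (hL0 : 0 ≤ L)
    (f : ℝ → ℝ → ℝ) (hf : ∀ x t, f x t = (σ * t / π) / (x ^ 2 + σ ^ 2 * t ^ 2))
    (g : ℝ → ℝ) (hg : ∀ x, g x = f x (T / 2) * f (L - x) (T / 2) / f L T) :
    deriv (deriv g) (L / 2) = 0 ↔ L = σ * T := by
  have hπ : (0:ℝ) < π := Real.pi_pos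
  obtain ⟨a, ha⟩ : ∃ a : ℝ, a = σ * T / 2 := ⟨_, rfl⟩
  have ha0 : 0 < a := by rw [ha]; positivity
  have hfLT : 0 < f L T := by rw [hf]; positivity
  obtain ⟨k, hk⟩ : ∃ k : ℝ, k = (a / π) ^ 2 / f L T := ⟨_, rfl⟩
  have hk0 : 0 < k := by rw [hk]; positivity
  have hPne : ∀ x : ℝ, (x ^ 2 + a ^ 2) * ((L - x) ^ 2 + a ^ 2) ≠ 0 := by
    intro x; positivity
  have hgfun : g = fun x => k * ((x ^ 2 + a ^ 2) * ((L - x) ^ 2 + a ^ 2))⁻¹ := by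
    funext x
    rw [hg, hf, hf, hf, hk, ha]
    have h1 : x ^ 2 + σ ^ 2 * (T / 2) ^ 2 ≠ 0 := by positivity
    have h2 : (L - x) ^ 2 + σ ^ 2 * (T / 2) ^ 2 ≠ 0 := by positivity
    have h3 : L ^ 2 + σ ^ 2 * T ^ 2 ≠ 0 := by positivity
    have h4 : σ * T ≠ 0 := by positivity
    have h5 : π ≠ 0 := ne_of_gt hπ
    rw [hf]
    field_simp
  have hA : ∀ x : ℝ, HasDerivAt (fun y : ℝ => y ^ 2 + a ^ 2) (2 * x) x := by
    intro x
    simpa using (hasDerivAt_pow 2 x).add_const (a ^ 2)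
  have hB : ∀ x : ℝ, HasDerivAt (fun y : ℝ => (L - y) ^ 2 + a ^ 2) (-(2 * (L - x))) x := by
    intro x
    have h0 : HasDerivAt (fun y : ℝ => L - y) (-1) x := by
      simpa using (hasDerivAt_id x).const_sub L
    have := (h0.pow 2).add_const (a ^ 2)
    refine this.congr_deriv ?_
    push_cast
    ring
  have hP : ∀ x : ℝ, HasDerivAt (fun y : ℝ => (y ^ 2 + a ^ 2) * ((L - y) ^ 2 + a ^ 2))
      (2 * x * ((L - x) ^ 2 + a ^ 2) + (x ^ 2 + a ^ 2) * (-(2 * (L - x)))) x := by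
    intro x
    exact (hA x).mul (hB x)
  have hg1 : ∀ x : ℝ, HasDerivAt g
      (k * (-(2 * x * ((L - x) ^ 2 + a ^ 2) + (x ^ 2 + a ^ 2) * (-(2 * (L - x)))) /
        ((x ^ 2 + a ^ 2) * ((L - x) ^ 2 + a ^ 2)) ^ 2)) x := by
    intro x
    rw [hgfun]
    exact ((hP x).inv (hPne x)).const_mul k
  have hF : deriv g = fun x => k * (-(2 * x * ((L - x) ^ 2 + a ^ 2) + (x ^ 2 + a ^ 2) * (-(2 * (L - x)))) /
        ((x ^ 2 + a ^ 2) * ((L - x) ^ 2 + a ^ 2)) ^ 2) :=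
    funext fun x => (hg1 x).deriv
  -- second derivative at L/2
  have hN : HasDerivAt (fun x : ℝ => -(2 * x * ((L - x) ^ 2 + a ^ 2) + (x ^ 2 + a ^ 2) * (-(2 * (L - x)))))
      (-((2 * ((L - L / 2) ^ 2 + a ^ 2) + 2 * (L / 2) * (-(2 * (L - L / 2)))) +
        (2 * (L / 2) * (-(2 * (L - L / 2))) + ((L / 2) ^ 2 + a ^ 2) * 2))) (L / 2) := by
    have h2y : HasDerivAt (fun y : ℝ => 2 * y) 2 (L / 2) := by
      simpa using (hasDerivAt_id (L / 2)).const_mul 2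
    have hC : HasDerivAt (fun y : ℝ => -(2 * (L - y))) 2 (L / 2) := by
      have h0 : HasDerivAt (fun y : ℝ => L - y) (-1) (L / 2) := by
        simpa using (hasDerivAt_id (L / 2)).const_sub L
      have := (h0.const_mul 2).neg
      refine this.congr_deriv ?_
      ring
    have t1 := h2y.mul (hB (L / 2))
    have t2 := (hA (L / 2)).mul hC
    exact (t1.add t2).neg
  have hD : HasDerivAt (fun x : ℝ => ((x ^ 2 + a ^ 2) * ((L - x) ^ 2 + a ^ 2)) ^ 2)
      (2 * (((L / 2) ^ 2 + a ^ 2) * ((L - L / 2) ^ 2 + a ^ 2)) ^ 1 *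
        (2 * (L / 2) * ((L - L / 2) ^ 2 + a ^ 2) + ((L / 2) ^ 2 + a ^ 2) * (-(2 * (L - L / 2)))))
      (L / 2) :=
    (hP (L / 2)).pow 2
  have hDne : (((L / 2) ^ 2 + a ^ 2) * ((L - L / 2) ^ 2 + a ^ 2)) ^ 2 ≠ 0 := by positivity
  have hG := (hN.div hD hDne).const_mul k
  have hmpos : (0:ℝ) < (L / 2) ^ 2 + a ^ 2 := by positivity
  have hm : ((L / 2) ^ 2 + a ^ 2) ≠ 0 := ne_of_gt hmpos
  have hfinal : deriv (deriv g) (L / 2) = k * ((L ^ 2 - 4 * a ^ 2) / ((L / 2) ^ 2 + a ^ 2) ^ 4) := by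
    rw [hF]
    erw [hG.deriv]
    rw [show L - L / 2 = L / 2 by ring]
    field_simp
    ring
  rw [hfinal]
  have hm4 : (0:ℝ) < ((L / 2) ^ 2 + a ^ 2) ^ 4 := by positivity
  constructor
  · intro h
    have h0 : L ^ 2 - 4 * a ^ 2 = 0 := by
      rcases mul_eq_zero.mp h with h' | h'
      · exact absurd h' (ne_of_gt hk0)
      · rcases div_eq_zero_iff.mp h' with h'' | h''
        · exact h''
        · exact absurd h'' (ne_of_gt hm4)
    have h1 : (L - 2 * a) * (L + 2 * a) = 0 := by linear_combination h0
    rcases mul_eq_zero.mp h1 with h2 | h2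
    · rw [ha] at h2; linarith
    · rw [ha] at h2; linarith
  · intro h
    rw [h, ha]
    rw [show (σ * T) ^ 2 - 4 * (σ * T / 2) ^ 2 = 0 by ring]
    simp
end

section
/- For L > σT, the points x± = [L ± √(L² − σ²T²)]/2 are critical points of the Cauchy bridge midpoint density g (i.e., g′(x±) = 0), and moreover they are strict local maxima of g. -/
open Real Filter

/-- Auxiliary lemma: for `h x = K / ((x*(L-x) - c^2)^2 + c^2*L^2)` with `K, c, L > 0`,
any point `x0` with `x0*(L-x0) = c^2` is a critical point and strict local max,
provided the other root `xo` of `x*(L-x) = c^2` is distinct from `x0`. -/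
lemma cauchy_aux (K c L : ℝ) (hK : 0 < K) (hc : 0 < c) (hL : 0 < L)
    (g : ℝ → ℝ) (hg : ∀ x, g x = K / ((x * (L - x) - c ^ 2) ^ 2 + c ^ 2 * L ^ 2))
    (x0 xo : ℝ) (hxo : xo ≠ x0) (hsum : x0 + xo = L) (hprod : x0 * xo = c ^ 2) :
    deriv g x0 = 0 ∧ ∀ᶠ x in nhdsWithin x0 {x0}ᶜ, g x < g x0 := by
  have hx0 : x0 * (L - x0) - c ^ 2 = 0 := by
    have : L - x0 = xo := by linarith
    rw [this]; linarith
  have hfac : ∀ x, x * (L - x) - c ^ 2 = -((x - x0) * (x - xo)) := by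
    intro x
    have : L = x0 + xo := hsum.symm
    rw [this, ← hprod]; ring
  have hpos : 0 < c ^ 2 * L ^ 2 := by positivity
  constructor
  · -- derivative is zero
    have hr : HasDerivAt (fun x => x * (L - x) - c ^ 2) (L - 2 * x0) x0 := by
      have h1 : HasDerivAt (fun x : ℝ => x * (L - x) - c ^ 2)
          (1 * (L - x0) + x0 * (0 - 1) - 0) x0 := by
        exact (((hasDerivAt_id x0).mul
          ((hasDerivAt_const x0 L).sub (hasDerivAt_id x0))).sub
          (hasDerivAt_const x0 (c ^ 2)))
      convert h1 using 1; ring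
    have hq : HasDerivAt (fun x => (x * (L - x) - c ^ 2) ^ 2 + c ^ 2 * L ^ 2)
        ((2 : ℕ) * (x0 * (L - x0) - c ^ 2) ^ 1 * (L - 2 * x0)) x0 :=
      (hr.pow 2).add_const _
    have hqne : (x0 * (L - x0) - c ^ 2) ^ 2 + c ^ 2 * L ^ 2 ≠ 0 := by
      rw [hx0]; simpa using hpos.ne'
    have hinv : HasDerivAt (fun x => K * ((x * (L - x) - c ^ 2) ^ 2 + c ^ 2 * L ^ 2)⁻¹) _ x0 :=
      (hq.inv hqne).const_mul K
    have hgeq : g = fun x => K * ((x * (L - x) - c ^ 2) ^ 2 + c ^ 2 * L ^ 2)⁻¹ := by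
      funext x; rw [hg x, div_eq_mul_inv]
    rw [hgeq]
    rw [hinv.deriv]
    rw [hx0]
    simp
  · -- strict local max
    have h1 : ∀ᶠ x in nhdsWithin x0 {x0}ᶜ, x ≠ xo := by
      have : ∀ᶠ x in nhds x0, x ≠ xo := eventually_ne_nhds hxo.symm
      exact this.filter_mono nhdsWithin_le_nhds
    have h2 : ∀ᶠ x in nhdsWithin x0 {x0}ᶜ, x ≠ x0 := by
      filter_upwards [eventually_mem_nhdsWithin] with x hx
      simpa using hx
    filter_upwards [h1, h2] with x hne hne0
    rw [hg x, hg x0, hx0]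
    have hne' : x * (L - x) - c ^ 2 ≠ 0 := by
      rw [hfac x]
      intro h
      rcases mul_eq_zero.1 (neg_eq_zero.1 h) with h' | h'
      · exact hne0 (by linarith [sub_eq_zero.1 h'])
      · exact hne (by linarith [sub_eq_zero.1 h'])
    have hlt : (0 : ℝ) ^ 2 + c ^ 2 * L ^ 2 < (x * (L - x) - c ^ 2) ^ 2 + c ^ 2 * L ^ 2 := by
      have := pow_pos (abs_pos.2 hne') 2
      nlinarith [sq_nonneg (x * (L - x) - c ^ 2), sq_abs (x * (L - x) - c ^ 2)]
    exact div_lt_div_of_pos_left hK (by positivity) hlt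

/-- For `L > σT`, the points `x± = (L ± √(L² − σ²T²))/2` are critical points of
the Cauchy bridge midpoint density, and are strict local maxima. -/
theorem cauchy_bridge_side_peaks (σ T L : ℝ) (hσ : 0 < σ) (hT : 0 < T)
    (hL : σ * T < L)
    (f : ℝ → ℝ → ℝ) (hf : ∀ x t, f x t = (σ * t / π) / (x ^ 2 + σ ^ 2 * t ^ 2))
    (g : ℝ → ℝ) (hg : ∀ x, g x = f x (T / 2) * f (L - x) (T / 2) / f L T)
    (xp xm : ℝ)
    (hxp : xp = (L + Real.sqrt (L ^ 2 - σ ^ 2 * T ^ 2)) / 2)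
    (hxm : xm = (L - Real.sqrt (L ^ 2 - σ ^ 2 * T ^ 2)) / 2) :
    deriv g xp = 0 ∧ deriv g xm = 0 ∧
      (∀ᶠ x in nhdsWithin xp {xp}ᶜ, g x < g xp) ∧
      (∀ᶠ x in nhdsWithin xm {xm}ᶜ, g x < g xm) := by
  have hσT : 0 < σ * T := mul_pos hσ hT
  have hLpos : 0 < L := hσT.trans hL
  set c := σ * T / 2 with hc_def
  have hc : 0 < c := by positivity
  set K := c * (L ^ 2 + 4 * c ^ 2) / (2 * π) with hK_def
  have hK : 0 < K := by positivity
  have hπ : (π : ℝ) ≠ 0 := Real.pi_ne_zero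
  -- rewrite g in the canonical form
  have hgeq : ∀ x, g x = K / ((x * (L - x) - c ^ 2) ^ 2 + c ^ 2 * L ^ 2) := by
    intro x
    rw [hg x, hf, hf, hf]
    have d1 : x ^ 2 + σ ^ 2 * (T / 2) ^ 2 ≠ 0 := by positivity
    have d2 : (L - x) ^ 2 + σ ^ 2 * (T / 2) ^ 2 ≠ 0 := by positivity
    have d3 : L ^ 2 + σ ^ 2 * T ^ 2 ≠ 0 := by positivity
    have d4 : (x * (L - x) - c ^ 2) ^ 2 + c ^ 2 * L ^ 2 ≠ 0 := by positivity
    rw [hK_def, hc_def]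
    field_simp
    ring
  -- the roots
  set s := Real.sqrt (L ^ 2 - σ ^ 2 * T ^ 2) with hs_def
  have hs2 : s ^ 2 = L ^ 2 - σ ^ 2 * T ^ 2 := by
    rw [hs_def, sq_sqrt]
    nlinarith
  have hspos : 0 < s := by
    rw [hs_def]
    apply Real.sqrt_pos.2
    nlinarith
  have hsum : xp + xm = L := by rw [hxp, hxm]; ring
  have hprod : xp * xm = c ^ 2 := by
    rw [hxp, hxm, hc_def]
    nlinarith [hs2]
  have hne : xm ≠ xp := by
    rw [hxp, hxm]
    intro h
    have h2 : L - s = L + s := by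
      field_simp at h
      linarith
    linarith
  have hp := cauchy_aux K c L hK hc hLpos g hgeq xp xm hne hsum hprod
  have hm := cauchy_aux K c L hK hc hLpos g hgeq xm xp hne.symm
    (by linarith) (by rw [mul_comm]; exact hprod)
  exact ⟨hp.1, hm.1, hp.2, hm.2⟩
end

section
/- For the Cauchy bridge midpoint density g with L > σT, g(L/2) < g(x₊) where x₊ = [L + √(L² − σ²T²)]/2; i.e., past the bifurcation the central point is strictly lower than the side peaks. -/
open Real

/-- Past the bifurcation (`L > σT`), the Cauchy bridge midpoint density is
strictly lower at the center than at the side peak. -/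
theorem cauchy_bridge_center_below_peak (σ T L : ℝ) (hσ : 0 < σ) (hT : 0 < T)
    (hL : σ * T < L)
    (f : ℝ → ℝ → ℝ) (hf : ∀ x t, f x t = (σ * t / π) / (x ^ 2 + σ ^ 2 * t ^ 2))
    (g : ℝ → ℝ) (hg : ∀ x, g x = f x (T / 2) * f (L - x) (T / 2) / f L T) :
    g (L / 2) < g ((L + Real.sqrt (L ^ 2 - σ ^ 2 * T ^ 2)) / 2) := by
  have hπ := Real.pi_pos
  have hst : 0 < σ * T := mul_pos hσ hT
  have hL0 : 0 < L := hst.trans hL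
  have hpos : 0 < L ^ 2 - σ ^ 2 * T ^ 2 := by nlinarith
  set s := Real.sqrt (L ^ 2 - σ ^ 2 * T ^ 2) with hsdef
  have hs2 : s ^ 2 = L ^ 2 - σ ^ 2 * T ^ 2 := Real.sq_sqrt hpos.le
  have hs4 : s ^ 4 = (L ^ 2 - σ ^ 2 * T ^ 2) ^ 2 := by
    have : s ^ 4 = (s ^ 2) ^ 2 := by ring
    rw [this, hs2]
  simp only [hg, hf]
  have hK : 0 < σ * T / π / (L ^ 2 + σ ^ 2 * T ^ 2) := by positivity
  rw [div_lt_div_iff_of_pos_right hK]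
  have hA : 0 < (L / 2) ^ 2 + σ ^ 2 * (T / 2) ^ 2 := by positivity
  have hB : 0 < (L - L / 2) ^ 2 + σ ^ 2 * (T / 2) ^ 2 := by positivity
  have hA' : 0 < ((L + s) / 2) ^ 2 + σ ^ 2 * (T / 2) ^ 2 := by positivity
  have hB' : 0 < (L - (L + s) / 2) ^ 2 + σ ^ 2 * (T / 2) ^ 2 := by positivity
  have hc : 0 < σ * (T / 2) / π := by positivity
  simp only [div_mul_div_comm]
  rw [div_lt_div_iff₀ (by positivity) (by positivity)]
  have key : (((L + s) / 2) ^ 2 + σ ^ 2 * (T / 2) ^ 2) *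
      ((L - (L + s) / 2) ^ 2 + σ ^ 2 * (T / 2) ^ 2) <
      ((L / 2) ^ 2 + σ ^ 2 * (T / 2) ^ 2) *
      ((L - L / 2) ^ 2 + σ ^ 2 * (T / 2) ^ 2) := by
    nlinarith [hs2, hs4, sq_nonneg (L ^ 2 - σ ^ 2 * T ^ 2), hpos, sq_nonneg s]
  exact mul_lt_mul_of_pos_left key (by positivity)
end

section
/- For L with 0 ≤ L < σT, the Cauchy bridge midpoint density g has exactly one critical point on ℝ, located at x = L/2; for L > σT it has exactly three critical points, at L/2 and at [L ± √(L² − σ²T²)]/2. -/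
open Real

/-- Critical-point structure of the Cauchy bridge midpoint density: a unique
critical point at `L/2` for `0 ≤ L < σT`, and exactly three critical points
`L/2`, `(L ± √(L² − σ²T²))/2` for `L > σT`. -/
theorem cauchy_bridge_critical_points (σ T L : ℝ) (hσ : 0 < σ) (hT : 0 < T)
    (hL0 : 0 ≤ L)
    (f : ℝ → ℝ → ℝ) (hf : ∀ x t, f x t = (σ * t / π) / (x ^ 2 + σ ^ 2 * t ^ 2))
    (g : ℝ → ℝ) (hg : ∀ x, g x = f x (T / 2) * f (L - x) (T / 2) / f L T) :
    (L < σ * T → ∀ x : ℝ, deriv g x = 0 ↔ x = L / 2) ∧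
    (σ * T < L → ∀ x : ℝ, deriv g x = 0 ↔
      x = L / 2 ∨ x = (L - Real.sqrt (L ^ 2 - σ ^ 2 * T ^ 2)) / 2
        ∨ x = (L + Real.sqrt (L ^ 2 - σ ^ 2 * T ^ 2)) / 2) := by
  have hπ := Real.pi_pos
  set b : ℝ := σ^2*T^2/4 with hbdef
  have hb : 0 < b := by positivity
  set c : ℝ := (σ*T/(2*π))^2 * (L^2+σ^2*T^2) * π/(σ*T) with hcdef
  have hc : 0 < c := by positivity
  have hgeq : ∀ x, g x = c / ((x^2+b)*((L-x)^2+b)) := by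
    intro x
    rw [hg, hf, hf, hf]
    have h1 : x^2 + σ^2*(T/2)^2 ≠ 0 := by positivity
    have h2 : (L-x)^2 + σ^2*(T/2)^2 ≠ 0 := by positivity
    have h3 : L^2 + σ^2*T^2 ≠ 0 := by positivity
    have h4 : π ≠ 0 := ne_of_gt hπ
    have h5 : x^2 + b ≠ 0 := by positivity
    have h6 : (L-x)^2 + b ≠ 0 := by positivity
    have hσT : σ * T ≠ 0 := by positivity
    rw [hbdef, hcdef]
    field_simp
    ring
  have hP : ∀ x : ℝ, (x^2+b)*((L-x)^2+b) ≠ 0 := fun x => by positivity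
  have hderiv : ∀ x : ℝ, deriv g x =
      -(c * (2*(2*x-L)*(x^2-L*x+b))) / (((x^2+b)*((L-x)^2+b))^2) := by
    intro x
    have hgf : g = fun x => c / ((x^2+b)*((L-x)^2+b)) := funext hgeq
    have h1 : HasDerivAt (fun x : ℝ => x^2+b) (2*x) x := by
      simpa using (hasDerivAt_pow 2 x).add_const b
    have hin : HasDerivAt (fun x : ℝ => L - x) (-1) x := by
      simpa using (hasDerivAt_id x).const_sub L
    have h2 : HasDerivAt (fun x : ℝ => (L-x)^2+b) ((2*(L-x)^1)*(-1)) x := by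
      exact (((hasDerivAt_pow 2 (L-x)).comp x hin).add_const b).congr_deriv (by norm_num)
    have h3 := h1.mul h2
    have hdiv := (hasDerivAt_const x c).div h3 (hP x)
    rw [hgf]; refine hdiv.deriv.trans ?_; simp only [Pi.mul_apply]
    ring
  constructor
  · intro hLT x
    have hq : x^2 - L*x + b ≠ 0 := by
      have : 0 < x^2 - L*x + b := by
        rw [hbdef]; nlinarith [sq_nonneg (2*x - L)]
      exact ne_of_gt this
    have hP2 : ((x^2+b)*((L-x)^2+b))^2 ≠ 0 := pow_ne_zero _ (hP x)
    rw [hderiv x, div_eq_zero_iff, or_iff_left hP2, neg_eq_zero]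
    constructor
    · intro h
      rcases mul_eq_zero.1 h with h | h
      · exact absurd h hc.ne'
      · rcases mul_eq_zero.1 h with h | h
        · rcases mul_eq_zero.1 h with h | h
          · norm_num at h
          · linarith
        · exact absurd h hq
    · intro h; rw [h]; ring
  · intro hLT x
    have hd : 0 < L^2 - σ^2*T^2 := by nlinarith [mul_pos hσ hT]
    have hs : (Real.sqrt (L^2 - σ^2*T^2))^2 = L^2 - σ^2*T^2 := Real.sq_sqrt hd.le
    set s : ℝ := Real.sqrt (L^2 - σ^2*T^2) with hsdef
    have hP2 : ((x^2+b)*((L-x)^2+b))^2 ≠ 0 := pow_ne_zero _ (hP x)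
    rw [hderiv x, div_eq_zero_iff, or_iff_left hP2, neg_eq_zero]
    constructor
    · intro h
      rcases mul_eq_zero.1 h with h | h
      · exact absurd h hc.ne'
      · rcases mul_eq_zero.1 h with h | h
        · rcases mul_eq_zero.1 h with h | h
          · norm_num at h
          · left; linarith
        · have hfac : (2*x - L - s) * (2*x - L + s) = 0 := by
            rw [hbdef] at h
            linear_combination 4*h - hs
          rcases mul_eq_zero.1 hfac with h2 | h2
          · right; right; linarith
          · right; left; linarith
    · rintro (h | h | h) <;> subst h
      · ring
      · have hq0 : ((L-s)/2)^2 - L*((L-s)/2) + b = 0 := by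
          rw [hbdef]; linear_combination hs/4
        rw [hq0]; ring
      · have hq0 : ((L+s)/2)^2 - L*((L+s)/2) + b = 0 := by
          rw [hbdef]; linear_combination hs/4
        rw [hq0]; ring
end
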